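/- For all positive integers n and k with k ≤ n, Σ_{i=1}^{n-k+1} (1/i)·C(n-i,k-1) = Σ_{i=1}^{n-k+1} ((-1)^{i+1}/i)·C(n, k+i-1). -/

import Mathlib

/-- Unsigned Stirling numbers of the first kind. -/
def stirling1 : ℕ → ℕ → ℕ
  | 0, 0 => 1
  | 0, _ + 1 => 0
  | _ + 1, 0 => 0
  | n + 1, k + 1 => stirling1 n k + n * stirling1 n (k + 1)

/-- Stirling numbers of the second kind. -/
def stirling2 : ℕ → ℕ → ℕ
  | 0, 0 => 1
  | 0, _ + 1 => 0
  | _ + 1, 0 => 0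
  | n + 1, k + 1 => stirling2 n k + (k + 1) * stirling2 n (k + 1)

open scoped BigOperators

def L (n k : ℕ) : ℚ := ∑ i ∈ Finset.Icc 1 (n - k + 1), (1 / (i : ℚ)) * ((n - i).choose (k - 1) : ℚ)
def R (n k : ℕ) : ℚ := ∑ i ∈ Finset.Icc 1 (n - k + 1), ((-1 : ℚ) ^ (i + 1) / (i : ℚ)) * ((n.choose (k + i - 1)) : ℚ)

lemma base (k : ℕ) (hk : 1 ≤ k) : L k k = R k k := by
  rw [L, R]
  have h1 : k - k + 1 = 1 := by omega
  have h2 : k + 1 - 1 = k := by omega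
  rw [h1, Finset.Icc_self, Finset.sum_singleton, Finset.sum_singleton, h2]
  simp [Nat.choose_self]

lemma lrec (n k : ℕ) (hk : 2 ≤ k) (hkn : k ≤ n) : L (n+1) k = L n k + L n (k-1) := by
  have e1 : n + 1 - k + 1 = (n - k + 1) + 1 := by omega
  have e2 : n - (k-1) + 1 = (n - k + 1) + 1 := by omega
  have e3 : k - 1 - 1 = k - 2 := by omega
  rw [L, L, L, e1, e2, e3]
  set m := n - k + 1 with hm
  have step : ∀ i ∈ Finset.Icc 1 (m+1),
      (1 / (i:ℚ)) * ((n + 1 - i).choose (k-1) : ℚ)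
        = (1 / (i:ℚ)) * ((n - i).choose (k-1) : ℚ) + (1 / (i:ℚ)) * ((n - i).choose (k-2) : ℚ) := by
    intro i hi
    simp only [Finset.mem_Icc] at hi
    have h1 : n + 1 - i = (n - i) + 1 := by omega
    have h2 : k - 1 = (k - 2) + 1 := by omega
    rw [h1, h2, Nat.choose_succ_succ]
    push_cast
    ring
  rw [Finset.sum_congr rfl step, Finset.sum_add_distrib,
      Finset.sum_Icc_succ_top (by omega : 1 ≤ m + 1)]
  have hz : ((n - (m+1)).choose (k-1) : ℚ) = 0 := by
    have h : n - (m+1) = k - 2 := by omega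
    rw [h, Nat.choose_eq_zero_of_lt (by omega)]
    simp
  rw [hz]
  ring

lemma rrec (n k : ℕ) (hk : 2 ≤ k) (hkn : k ≤ n) : R (n+1) k = R n k + R n (k-1) := by
  have e1 : n + 1 - k + 1 = (n - k + 1) + 1 := by omega
  have e2 : n - (k-1) + 1 = (n - k + 1) + 1 := by omega
  rw [R, R, R, e1, e2]
  set m := n - k + 1 with hm
  have step : ∀ i ∈ Finset.Icc 1 (m+1),
      ((-1:ℚ)^(i+1)/(i:ℚ)) * (((n+1).choose (k+i-1)) : ℚ)
        = ((-1:ℚ)^(i+1)/(i:ℚ)) * ((n.choose (k+i-1)) : ℚ)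
          + ((-1:ℚ)^(i+1)/(i:ℚ)) * ((n.choose (k-1+i-1)) : ℚ) := by
    intro i hi
    simp only [Finset.mem_Icc] at hi
    have h2 : k - 1 + i - 1 = k + i - 2 := by omega
    have h1 : k + i - 1 = (k + i - 2) + 1 := by omega
    rw [h2, h1, Nat.choose_succ_succ]
    push_cast
    ring
  rw [Finset.sum_congr rfl step, Finset.sum_add_distrib,
      Finset.sum_Icc_succ_top (by omega : 1 ≤ m + 1)]
  have hz : ((n.choose (k + (m+1) - 1)) : ℚ) = 0 := by
    have h : k + (m+1) - 1 = n + 1 := by omega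
    rw [h, Nat.choose_eq_zero_of_lt (by omega)]
    simp
  rw [hz]
  ring

lemma lrec1 (n : ℕ) (hn : 1 ≤ n) : L (n+1) 1 = L n 1 + 1/((n:ℚ)+1) := by
  rw [L, L]
  have e1 : n + 1 - 1 + 1 = n + 1 := by omega
  have e2 : n - 1 + 1 = n := by omega
  rw [e1, e2, Finset.sum_Icc_succ_top (by omega : 1 ≤ n + 1)]
  simp only [Nat.sub_self, Nat.choose_zero_right, Nat.cast_one, mul_one]
  push_cast
  ring

lemma alt_sum (n : ℕ) : ∑ i ∈ Finset.Icc 1 (n+1), (-1:ℚ)^(i+1) * (((n+1).choose i) : ℚ) = 1 := by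
  have halt : ∑ i ∈ Finset.range (n+2), (-1:ℚ)^i * (((n+1).choose i) : ℚ) = 0 := by
    have h := Int.alternating_sum_range_choose (n := n+1)
    have h' : (∑ i ∈ Finset.range (n+2), (-1:ℤ)^i * (((n+1).choose i) : ℤ)) = 0 := by
      simpa using h
    have := congrArg (fun x : ℤ => (x : ℚ)) h'
    push_cast at this
    simpa using this
  have hins : Finset.range (n+2) = insert 0 (Finset.Icc 1 (n+1)) := by
    ext x
    simp only [Finset.mem_range, Finset.mem_insert, Finset.mem_Icc]
    omega
  rw [hins, Finset.sum_insert (by simp)] at halt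
  simp only [pow_zero, Nat.choose_zero_right, Nat.cast_one, mul_one, one_mul] at halt
  have h2 : ∑ i ∈ Finset.Icc 1 (n+1), (-1:ℚ)^i * (((n+1).choose i) : ℚ) = -1 := by linarith
  calc ∑ i ∈ Finset.Icc 1 (n+1), (-1:ℚ)^(i+1) * (((n+1).choose i) : ℚ)
      = ∑ i ∈ Finset.Icc 1 (n+1), -((-1:ℚ)^i * (((n+1).choose i) : ℚ)) := by
        apply Finset.sum_congr rfl
        intro i _
        rw [pow_succ]
        ring
    _ = -(∑ i ∈ Finset.Icc 1 (n+1), (-1:ℚ)^i * (((n+1).choose i) : ℚ)) := by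
        rw [Finset.sum_neg_distrib]
    _ = 1 := by rw [h2]; ring

lemma rrec1 (n : ℕ) (hn : 1 ≤ n) : R (n+1) 1 = R n 1 + 1/((n:ℚ)+1) := by
  rw [R, R]
  have e1 : n + 1 - 1 + 1 = n + 1 := by omega
  have e2 : n - 1 + 1 = n := by omega
  rw [e1, e2]
  have step : ∀ i ∈ Finset.Icc 1 (n+1),
      ((-1:ℚ)^(i+1)/(i:ℚ)) * (((n+1).choose (1+i-1)) : ℚ)
        = ((-1:ℚ)^(i+1)/(i:ℚ)) * ((n.choose (1+i-1)) : ℚ)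
          + ((-1:ℚ)^(i+1)/(i:ℚ)) * ((n.choose (i-1)) : ℚ) := by
    intro i hi
    simp only [Finset.mem_Icc] at hi
    have h1 : 1 + i - 1 = (i - 1) + 1 := by omega
    rw [h1, Nat.choose_succ_succ]
    push_cast
    ring
  rw [Finset.sum_congr rfl step, Finset.sum_add_distrib,
      Finset.sum_Icc_succ_top (by omega : 1 ≤ n + 1)]
  have hz : ((n.choose (1 + (n+1) - 1)) : ℚ) = 0 := by
    have h : 1 + (n+1) - 1 = n + 1 := by omega
    rw [h, Nat.choose_eq_zero_of_lt (by omega)]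
    simp
  rw [hz]
  have hB : ∑ i ∈ Finset.Icc 1 (n+1), ((-1:ℚ)^(i+1)/(i:ℚ)) * ((n.choose (i-1)) : ℚ)
      = 1/((n:ℚ)+1) := by
    have key : ∀ i ∈ Finset.Icc 1 (n+1), ((-1:ℚ)^(i+1)/(i:ℚ)) * ((n.choose (i-1)):ℚ)
        = ((-1:ℚ)^(i+1) * (((n+1).choose i) : ℚ)) / ((n:ℚ)+1) := by
      intro i hi
      simp only [Finset.mem_Icc] at hi
      have hdiv : ((n:ℚ)+1) * ((n.choose (i-1)) : ℚ) = (i:ℚ) * (((n+1).choose i) : ℚ) := by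
        have h := Nat.add_one_mul_choose_eq n (i-1)
        have hi1 : i - 1 + 1 = i := by omega
        rw [hi1] at h
        have := congrArg (fun x : ℕ => (x : ℚ)) h
        push_cast at this
        linarith [this]
      have hi0 : (i:ℚ) ≠ 0 := by
        have : 0 < i := by omega
        positivity
      have hn0 : ((n:ℚ)+1) ≠ 0 := by positivity
      field_simp
      linear_combination hdiv
    rw [Finset.sum_congr rfl key, ← Finset.sum_div, alt_sum n]
  rw [hB]
  ring

lemma key_lemma : ∀ n k : ℕ, 1 ≤ k → k ≤ n → L n k = R n k := by
  intro n
  induction n with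
  | zero => intro k h1 h2; omega
  | succ n ih =>
    intro k h1 h2
    rcases eq_or_lt_of_le h2 with heq | hlt
    · rw [heq]; exact base (n+1) (by omega)
    · have hk_le : k ≤ n := by omega
      rcases eq_or_lt_of_le h1 with h1' | h1'
      · rw [← h1', lrec1 n (by omega), rrec1 n (by omega), ih 1 le_rfl (by omega)]
      · rw [lrec n k (by omega) hk_le, rrec n k (by omega) hk_le,
            ih k h1 hk_le, ih (k-1) (by omega) (by omega)]

theorem stmt_5 (n k : ℕ) (hk : 1 ≤ k) (hkn : k ≤ n) :
    (∑ i ∈ Finset.Icc 1 (n - k + 1), (1 / (i : ℚ)) * ((n - i).choose (k - 1) : ℚ)) =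
      ∑ i ∈ Finset.Icc 1 (n - k + 1), ((-1 : ℚ) ^ (i + 1) / (i : ℚ)) * (n.choose (k + i - 1) : ℚ) := by
  exact key_lemma n k hk hkn
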